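/- Let U be a right-free (G,H)-biset, V an (H,K)-biset, (u,v) ∈ U × V, and L ≤ G. Then L ≤ p₁((G × K)_{[u,v]}) if and only if L ≤ p₁((G × H)_u) and Lᵘ ≤ p₁((H × K)_v). -/

import Mathlib

/-- For `L ≤ A` and `D ≤ A × B`, the subgroup `{b | ∃ l ∈ L, (l,b) ∈ D} ≤ B`;
for `D = (A × B)_w` the stabilizer of a point `w` of an `(A,B)`-biset, this is `Lʷ`. -/
def lstarSub {A B : Type*} [Group A] [Group B] (L : Subgroup A) (D : Subgroup (A × B)) :
    Subgroup B where
  carrier := {b | ∃ l ∈ L, (l, b) ∈ D}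
  one_mem' := ⟨1, L.one_mem, D.one_mem⟩
  mul_mem' := fun ⟨l, hl, hD⟩ ⟨l', hl', hD'⟩ =>
    ⟨l * l', L.mul_mem hl hl', D.mul_mem hD hD'⟩
  inv_mem' := fun ⟨l, hl, hD⟩ => ⟨l⁻¹, L.inv_mem hl, D.inv_mem hD⟩

section Tensor

variable (G H K : Type*) [Group G] [Group H] [Group K]
variable (U V : Type*) [MulAction (G × H) U] [MulAction (H × K) V]

/-- The setoid on `U × V` whose classes are the `H`-orbits for `h • (u,v) = (u h⁻¹, h v)`;
bisets are encoded as `(G × H)`-sets via `(g,h) • u = g u h⁻¹`. -/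
def tensorSetoid : Setoid (U × V) where
  r p q := ∃ h : H, p.1 = ((1, h) : G × H) • q.1 ∧ p.2 = ((h, 1) : H × K) • q.2
  iseqv := by
    constructor
    · intro p
      exact ⟨1, by simp [← Prod.one_eq_mk], by simp [← Prod.one_eq_mk]⟩
    · rintro p q ⟨h, h1, h2⟩
      refine ⟨h⁻¹, ?_, ?_⟩ <;>
        simp [h1, h2, smul_smul, Prod.mk_mul_mk, ← Prod.one_eq_mk]
    · rintro p q r ⟨h, h1, h2⟩ ⟨h', h1', h2'⟩
      refine ⟨h * h', ?_, ?_⟩ <;>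
        simp [h1, h2, h1', h2', smul_smul, Prod.mk_mul_mk]

/-- The biset tensor product `U ×_H V`. -/
def Tensor : Type _ := Quotient (tensorSetoid G H K U V)

/-- The class `[u, v] ∈ U ×_H V`. -/
def tmk (p : U × V) : Tensor G H K U V := Quotient.mk (tensorSetoid G H K U V) p

/-- The `(G,K)`-biset structure on `U ×_H V`. -/
instance : MulAction (G × K) (Tensor G H K U V) where
  smul a := Quotient.map
    (fun p => (((a.1, 1) : G × H) • p.1, ((1, a.2) : H × K) • p.2))
    (by
      rintro p q ⟨h, h1, h2⟩
      exact ⟨h, by simp [h1, smul_smul, Prod.mk_mul_mk],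
        by simp [h2, smul_smul, Prod.mk_mul_mk]⟩)
  one_smul := by
    intro x
    induction x using Quotient.ind
    refine congrArg (Quotient.mk _) ?_
    simp [← Prod.one_eq_mk]
  mul_smul := by
    intro a b x
    induction x using Quotient.ind
    refine congrArg (Quotient.mk _) ?_
    simp [smul_smul, Prod.mk_mul_mk]

/-- `p₁(D)`, the image of `D ≤ A × B` under the first projection. -/
def projFst {A B : Type*} [Group A] [Group B] (D : Subgroup (A × B)) : Subgroup A :=
  D.map (MonoidHom.fst A B)

lemma smul_tmk (a : G × K) (p : U × V) :
    a • tmk G H K U V p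
      = tmk G H K U V (((a.1, 1) : G × H) • p.1, ((1, a.2) : H × K) • p.2) := rfl

lemma mem_stabilizer_tmk_iff (g : G) (k : K) (u : U) (v : V) :
    (g, k) ∈ MulAction.stabilizer (G × K) (tmk G H K U V (u, v)) ↔
      ∃ h : H, (g, h) ∈ MulAction.stabilizer (G × H) u ∧
        (h, k) ∈ MulAction.stabilizer (H × K) v := by
  rw [MulAction.mem_stabilizer_iff, smul_tmk]
  constructor
  · intro hEq
    have hr : ∃ h : H, (((g, 1) : G × H) • u) = ((1, h) : G × H) • u ∧
        (((1, k) : H × K) • v) = ((h, 1) : H × K) • v := Quotient.exact hEq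
    obtain ⟨h, h1, h2⟩ := hr
    refine ⟨h⁻¹, ?_, ?_⟩
    · rw [MulAction.mem_stabilizer_iff]
      have : ((1, h⁻¹) : G × H) • (((g, 1) : G × H) • u)
          = ((1, h⁻¹) : G × H) • (((1, h) : G × H) • u) := by rw [h1]
      simpa [smul_smul, Prod.mk_mul_mk, ← Prod.one_eq_mk] using this
    · rw [MulAction.mem_stabilizer_iff]
      have : ((h⁻¹, 1) : H × K) • (((1, k) : H × K) • v)
          = ((h⁻¹, 1) : H × K) • (((h, 1) : H × K) • v) := by rw [h2]
      simpa [smul_smul, Prod.mk_mul_mk, ← Prod.one_eq_mk] using this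
  · rintro ⟨h, h1, h2⟩
    rw [MulAction.mem_stabilizer_iff] at h1 h2
    refine Quotient.sound ⟨h⁻¹, ?_, ?_⟩
    · have : ((1, h⁻¹) : G × H) • (((g, h) : G × H) • u)
          = ((1, h⁻¹) : G × H) • u := by rw [h1]
      simpa [smul_smul, Prod.mk_mul_mk] using this
    · have : ((h⁻¹, 1) : H × K) • (((h, k) : H × K) • v)
          = ((h⁻¹, 1) : H × K) • v := by rw [h2]
      simpa [smul_smul, Prod.mk_mul_mk] using this

/-- Let `U` be a `(G,H)`-biset which is free as a right `H`-set, `V` an `(H,K)`-biset,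
`(u,v) ∈ U × V` and `L ≤ G`.  Then `L ≤ p₁((G × K)_{[u,v]})` if and only if
`L ≤ p₁((G × H)_u)` and `Lᵘ ≤ p₁((H × K)_v)`. -/
theorem le_projFst_stabilizer_tmk_iff [Finite G] [Finite H] [Finite K] [Finite U] [Finite V]
    (hfree : ∀ (u : U) (h : H), ((1, h) : G × H) • u = u → h = 1)
    (L : Subgroup G) (u : U) (v : V) :
    L ≤ projFst (MulAction.stabilizer (G × K) (tmk G H K U V (u, v))) ↔
      L ≤ projFst (MulAction.stabilizer (G × H) u) ∧
        lstarSub L (MulAction.stabilizer (G × H) u) ≤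
          projFst (MulAction.stabilizer (H × K) v) := by
  constructor
  · intro hL
    constructor
    · intro l hl
      obtain ⟨⟨g, k⟩, hgk, hfst⟩ := hL hl
      cases hfst
      obtain ⟨h, h1, _⟩ := (mem_stabilizer_tmk_iff G H K U V g k u v).mp hgk
      exact ⟨(g, h), h1, rfl⟩
    · rintro h ⟨l, hl, hlh⟩
      obtain ⟨⟨g, k⟩, hgk, hfst⟩ := hL hl
      cases hfst
      obtain ⟨h', h1, h2⟩ := (mem_stabilizer_tmk_iff G H K U V g k u v).mp hgk
      have heq : h = h' := by
        have h3 := (MulAction.mem_stabilizer_iff.mp h1).trans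
          (MulAction.mem_stabilizer_iff.mp hlh).symm
        have h4 : ((1, h⁻¹ * h') : G × H) • u = u := by
          have := congrArg (fun x => ((g, h) : G × H)⁻¹ • x) h3
          simpa [smul_smul, Prod.inv_mk, Prod.mk_mul_mk, ← Prod.one_eq_mk] using this
        exact inv_mul_eq_one.mp (hfree u _ h4)
      subst heq
      exact ⟨(h, k), h2, rfl⟩
  · rintro ⟨hu, hv⟩ l hl
    obtain ⟨⟨g, h⟩, hgh, hfst⟩ := hu hl
    cases hfst
    have : h ∈ lstarSub L (MulAction.stabilizer (G × H) u) := ⟨g, hl, hgh⟩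
    obtain ⟨⟨h', k⟩, hhk, hfst'⟩ := hv this
    cases hfst'
    exact ⟨(g, k), (mem_stabilizer_tmk_iff G H K U V g k u v).mpr ⟨h', hgh, hhk⟩, rfl⟩

end Tensor
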